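/- Fix ε ∈ (0,1). Let (V_n) be a sequence of 2×2 symmetric positive semidefinite real matrices converging entrywise to a (symmetric positive semidefinite) matrix V. Then for every δ > 0 there exists N such that for all n ≥ N: Ψ⁻¹(V_n,ε) − δ(1,1) ⊆ Ψ⁻¹(V,ε) ⊆ Ψ⁻¹(V_n,ε) + δ(1,1), where for a set S ⊆ ℝ² and w ∈ ℝ², S ± w = {z ± w : z ∈ S}. -/

import Mathlib

open MeasureTheory ProbabilityTheory
open scoped Classical

noncomputable section

/-- The standard Gaussian measure on `ℝ²`. -/
def stdGaussian2 : Measure (Fin 2 → ℝ) :=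
  MeasureTheory.Measure.pi fun _ => gaussianReal 0 1

/-- `Ψ(z; V)`: probability that a centered Gaussian vector with covariance `V`
(the law of `V^{1/2} Z` for standard Gaussian `Z`) lies in `{u : u₁ ≤ z₁, u₂ ≤ z₂}`. -/
def Psi (V : Matrix (Fin 2) (Fin 2) ℝ) (z : ℝ × ℝ) : ℝ :=
  if hV : V.PosSemidef then
    ((stdGaussian2.map (fun u => (hV.1.eigenvectorUnitary.1 * Matrix.diagonal (Real.sqrt ∘ hV.1.eigenvalues) *
      (star hV.1.eigenvectorUnitary : Matrix (Fin 2) (Fin 2) ℝ)).mulVec u)) {w | w 0 ≤ z.1 ∧ w 1 ≤ z.2}).toReal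
  else 0

/-- `Ψ⁻¹(V, ε) = {z ∈ ℝ² : Ψ(-z₁, -z₂; V) ≥ 1 - ε}`. -/
def PsiInv (V : Matrix (Fin 2) (Fin 2) ℝ) (ε : ℝ) : Set (ℝ × ℝ) :=
  {z | 1 - ε ≤ Psi V (-z.1, -z.2)}

/-- The standard normal CDF `Φ`. -/
def Phi (x : ℝ) : ℝ := ((gaussianReal 0 1) (Set.Iic x)).toReal

/-- The inverse `Φ⁻¹` of the standard normal CDF. -/
def PhiInv (ε : ℝ) : ℝ := sSup {x | Phi x ≤ ε}

end

noncomputable section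

def Matrix.PosSemidef.sqrt {V : Matrix (Fin 2) (Fin 2) ℝ} (hV : V.PosSemidef) :
    Matrix (Fin 2) (Fin 2) ℝ :=
  hV.1.eigenvectorUnitary.1 * Matrix.diagonal (Real.sqrt ∘ hV.1.eigenvalues) *
    (star hV.1.eigenvectorUnitary : Matrix (Fin 2) (Fin 2) ℝ)

open scoped MatrixOrder in
lemma Matrix.PosSemidef.sqrt_eq_CFC {V : Matrix (Fin 2) (Fin 2) ℝ} (hV : V.PosSemidef) :
    hV.sqrt = CFC.sqrt V := by
  rw [CFC.sqrt_eq_real_sqrt V hV.nonneg, cfcₙ_eq_cfc, hV.1.cfc_eq, Matrix.IsHermitian.cfc,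
    Unitary.conjStarAlgAut_apply]
  simp [Matrix.PosSemidef.sqrt]

open scoped MatrixOrder in
lemma Matrix.PosSemidef.posSemidef_sqrt {V : Matrix (Fin 2) (Fin 2) ℝ} (hV : V.PosSemidef) :
    hV.sqrt.PosSemidef := by
  rw [hV.sqrt_eq_CFC]
  exact Matrix.nonneg_iff_posSemidef.mp (CFC.sqrt_nonneg V)

open scoped MatrixOrder in
lemma Matrix.PosSemidef.sqrt_mul_self {V : Matrix (Fin 2) (Fin 2) ℝ} (hV : V.PosSemidef) :
    hV.sqrt * hV.sqrt = V := by
  rw [hV.sqrt_eq_CFC]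
  exact CFC.sqrt_mul_sqrt_self V hV.nonneg

open scoped MatrixOrder in
lemma Matrix.PosSemidef.eq_sqrt_of_sq_eq {B V : Matrix (Fin 2) (Fin 2) ℝ} (hB : B.PosSemidef)
    (hV : V.PosSemidef) (h : B ^ 2 = V) : B = hV.sqrt := by
  rw [hV.sqrt_eq_CFC]
  exact (CFC.sqrt_unique (by rw [← pow_two]; exact h) hB.nonneg).symm

namespace PsiCont
open Filter

instance : IsProbabilityMeasure stdGaussian2 := by
  unfold stdGaussian2; infer_instance

def dot (a u : Fin 2 → ℝ) : ℝ := a 0 * u 0 + a 1 * u 1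

lemma measurable_dot (a : Fin 2 → ℝ) : Measurable (dot a) := by
  unfold dot
  exact ((measurable_pi_apply 0).const_mul _).add ((measurable_pi_apply 1).const_mul _)

lemma continuous_dot (a : Fin 2 → ℝ) : Continuous (dot a) := by
  unfold dot
  exact (continuous_const.mul (continuous_apply 0)).add
    (continuous_const.mul (continuous_apply 1))

def box (a b : Fin 2 → ℝ) (w : ℝ × ℝ) : Set (Fin 2 → ℝ) :=
  {u | dot a u ≤ w.1 ∧ dot b u ≤ w.2}

lemma measurableSet_box (a b : Fin 2 → ℝ) (w : ℝ × ℝ) : MeasurableSet (box a b w) :=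
  ((measurable_dot a measurableSet_Iic).inter (measurable_dot b measurableSet_Iic))

def psi (a b : Fin 2 → ℝ) (w : ℝ × ℝ) : ℝ := (stdGaussian2 (box a b w)).toReal

def tailSet (R : ℝ) : Set (Fin 2 → ℝ) := {u | ¬ (∀ i, |u i| ≤ R)}

/-- positive measure of nonempty open sets -/
lemma stdGaussian2_pos_of_isOpen {U : Set (Fin 2 → ℝ)} (hU : IsOpen U) (hne : U.Nonempty) :
    0 < stdGaussian2 U := by
  obtain ⟨x, hx⟩ := hne
  obtain ⟨r, hr, hball⟩ := Metric.isOpen_iff.mp hU x hx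
  have hballs : Metric.ball x r = Set.pi Set.univ (fun i => Metric.ball (x i) r) :=
    ball_pi x hr
  have hsub : Set.pi Set.univ (fun i => Metric.ball (x i) r) ⊆ U := hballs ▸ hball
  refine lt_of_lt_of_le ?_ (measure_mono hsub)
  rw [stdGaussian2, Measure.pi_pi]
  have hpos : ∀ i : Fin 2, 0 < gaussianReal 0 1 (Metric.ball (x i) r) := by
    intro i
    rw [pos_iff_ne_zero]
    intro h0
    have := (gaussianReal_absolutelyContinuous' 0 (by norm_num : (1 : NNReal) ≠ 0)) h0
    rw [Real.ball_eq_Ioo] at this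
    simp [Real.volume_Ioo] at this
    linarith
  rw [Fin.prod_univ_two]
  exact ENNReal.mul_pos (hpos 0).ne' (hpos 1).ne'

/-- hyperplanes are null -/
lemma stdGaussian2_hyperplane {a : Fin 2 → ℝ} (ha : a ≠ 0) (x : ℝ) :
    stdGaussian2 {u | dot a u = x} = 0 := by
  have hmp := measurePreserving_finTwoArrow (gaussianReal 0 1)
  have hms : MeasurableSet {u : Fin 2 → ℝ | dot a u = x} :=
    (measurable_dot a) (measurableSet_singleton x)
  have hms2 : MeasurableSet {p : ℝ × ℝ | a 0 * p.1 + a 1 * p.2 = x} :=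
    (((measurable_fst.const_mul _).add (measurable_snd.const_mul _))
      (measurableSet_singleton x))
  have key : stdGaussian2 {u | dot a u = x}
      = ((gaussianReal 0 1).prod (gaussianReal 0 1))
        {p : ℝ × ℝ | a 0 * p.1 + a 1 * p.2 = x} := by
    have hpre : (⇑MeasurableEquiv.finTwoArrow) ⁻¹' {p : ℝ × ℝ | a 0 * p.1 + a 1 * p.2 = x}
        = {u : Fin 2 → ℝ | dot a u = x} := by
      ext u
      simp [dot, MeasurableEquiv.finTwoArrow, Set.mem_setOf_eq]
    rw [stdGaussian2, ← hmp.map_eq,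
      Measure.map_apply MeasurableEquiv.finTwoArrow.measurable hms2, hpre]
  rw [key]
  rw [Measure.prod_apply hms2]
  by_cases h1 : a 1 ≠ 0
  · have : ∀ y : ℝ, (gaussianReal 0 1) (Prod.mk y ⁻¹' {p : ℝ × ℝ | a 0 * p.1 + a 1 * p.2 = x})
        = 0 := by
      intro y
      have hset : Prod.mk y ⁻¹' {p : ℝ × ℝ | a 0 * p.1 + a 1 * p.2 = x}
          = {(x - a 0 * y) / a 1} := by
        ext z
        simp only [Set.mem_preimage, Set.mem_setOf_eq, Set.mem_singleton_iff,
          eq_div_iff h1]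
        constructor
        · intro h; linarith
        · intro h; linarith
      rw [hset]
      exact (gaussianReal_absolutelyContinuous 0 (by norm_num : (1:NNReal) ≠ 0))
        (measure_singleton _)
    exact (lintegral_congr this).trans lintegral_zero
  · push_neg at h1
    have h0 : a 0 ≠ 0 := by
      intro h0; apply ha; funext i; fin_cases i <;> simp [h0, h1]
    have : ∀ y : ℝ, (gaussianReal 0 1) (Prod.mk y ⁻¹' {p : ℝ × ℝ | a 0 * p.1 + a 1 * p.2 = x})
        = if a 0 * y = x then 1 else 0 := by
      intro y
      by_cases hy : a 0 * y = x
      · have hset : Prod.mk y ⁻¹' {p : ℝ × ℝ | a 0 * p.1 + a 1 * p.2 = x} = Set.univ := by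
          ext z; simp [h1, hy]
        rw [hset, if_pos hy]; simp
      · have hset : Prod.mk y ⁻¹' {p : ℝ × ℝ | a 0 * p.1 + a 1 * p.2 = x} = ∅ := by
          ext z; simp [h1, hy]
        rw [hset, if_neg hy]; simp
    rw [lintegral_congr this]
    have : ∀ᵐ y ∂(gaussianReal 0 1), (if a 0 * y = x then (1:ENNReal) else 0) = 0 := by
      have hnull : (gaussianReal 0 1) {y : ℝ | a 0 * y = x} = 0 := by
        have hset : {y : ℝ | a 0 * y = x} = {x / a 0} := by
          ext y
          simp only [Set.mem_setOf_eq, Set.mem_singleton_iff, eq_div_iff h0]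
          constructor <;> intro h <;> linarith
        rw [hset]
        exact (gaussianReal_absolutelyContinuous 0 (by norm_num : (1:NNReal) ≠ 0))
          (measure_singleton _)
      filter_upwards [measure_eq_zero_iff_ae_notMem.mp hnull] with y hy
      rw [if_neg hy]
    exact (lintegral_congr_ae this).trans lintegral_zero

lemma exists_dot_eq {a : Fin 2 → ℝ} (ha : a ≠ 0) (s : ℝ) : ∃ u, dot a u = s := by
  by_cases h0 : a 0 ≠ 0
  · exact ⟨fun i => if i = 0 then s / a 0 else 0, by simp [dot]; field_simp⟩
  · push_neg at h0
    have h1 : a 1 ≠ 0 := by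
      intro h1; apply ha; funext i; fin_cases i <;> simp [h0, h1]
    exact ⟨fun i => if i = 1 then s / a 1 else 0, by simp [dot, h0]; field_simp⟩

/-- real-valued additive lower bound -/
lemma toReal_add_le {S T U : Set (Fin 2 → ℝ)} (hT : MeasurableSet T)
    (hd : Disjoint S T) (hsub : S ∪ T ⊆ U) :
    (stdGaussian2 S).toReal + (stdGaussian2 T).toReal ≤ (stdGaussian2 U).toReal := by
  rw [← ENNReal.toReal_add (measure_ne_top _ _) (measure_ne_top _ _), ← measure_union hd hT]
  exact ENNReal.toReal_mono (measure_ne_top _ _) (measure_mono hsub)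

def F (a : Fin 2 → ℝ) (x : ℝ) : ℝ := (stdGaussian2 {u | dot a u ≤ x}).toReal

lemma F_mono (a : Fin 2 → ℝ) : Monotone (F a) := by
  intro x y hxy
  exact ENNReal.toReal_mono (measure_ne_top _ _) (measure_mono (fun u hu => le_trans hu hxy))

lemma F_nonneg (a : Fin 2 → ℝ) (x : ℝ) : 0 ≤ F a x := ENNReal.toReal_nonneg

lemma F_le_one (a : Fin 2 → ℝ) (x : ℝ) : F a x ≤ 1 := by
  rw [F, ← ENNReal.toReal_one]
  exact ENNReal.toReal_mono (by simp) prob_le_one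

lemma exists_F_gt (a : Fin 2 → ℝ) {t : ℝ} (ht : t < 1) : ∃ M, t < F a M := by
  have hm : Monotone (fun n : ℕ => {u : Fin 2 → ℝ | dot a u ≤ (n : ℝ)}) := by
    intro m n hmn u hu
    simp only [Set.mem_setOf_eq] at hu ⊢
    exact le_trans hu (Nat.cast_le.mpr hmn)
  have hU : (⋃ n : ℕ, {u : Fin 2 → ℝ | dot a u ≤ (n : ℝ)}) = Set.univ := by
    ext u
    simp only [Set.mem_iUnion, Set.mem_setOf_eq, Set.mem_univ, iff_true]
    obtain ⟨n, hn⟩ := exists_nat_ge (dot a u)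
    exact ⟨n, hn⟩
  have h := tendsto_measure_iUnion_atTop (μ := stdGaussian2) hm
  rw [hU, measure_univ] at h
  have h' : Filter.Tendsto (fun n : ℕ => F a n) Filter.atTop (nhds 1) := by
    have := (ENNReal.tendsto_toReal (by simp : (1:ENNReal) ≠ ⊤)).comp h
    simpa [F, Function.comp_def] using this
  obtain ⟨n, hn⟩ := (h'.eventually (eventually_gt_nhds ht)).exists
  exact ⟨n, hn⟩

lemma exists_F_lt (a : Fin 2 → ℝ) {t : ℝ} (ht : 0 < t) : ∃ q, F a q < t := by
  have hm : Antitone (fun n : ℕ => {u : Fin 2 → ℝ | dot a u ≤ -(n : ℝ)}) := by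
    intro m n hmn u hu
    simp only [Set.mem_setOf_eq] at hu ⊢
    exact le_trans hu (neg_le_neg (Nat.cast_le.mpr hmn))
  have hU : (⋂ n : ℕ, dot a ⁻¹' Set.Iic (-(n : ℝ))) = ∅ := by
    ext u
    simp only [Set.mem_iInter, Set.mem_preimage, Set.mem_Iic, Set.mem_empty_iff_false,
      iff_false, not_forall]
    obtain ⟨n, hn⟩ := exists_nat_gt (-(dot a u))
    exact ⟨n, by push_neg; linarith⟩
  have h := tendsto_measure_iInter_atTop (μ := stdGaussian2)
    (fun n => ((measurable_dot a) measurableSet_Iic).nullMeasurableSet) hm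
    ⟨0, measure_ne_top _ _⟩
  rw [hU, measure_empty] at h
  have h' : Filter.Tendsto (fun n : ℕ => F a (-(n:ℝ))) Filter.atTop (nhds 0) := by
    have := (ENNReal.tendsto_toReal (by simp : (0:ENNReal) ≠ ⊤)).comp h
    exact this
  obtain ⟨n, hn⟩ := (h'.eventually (eventually_lt_nhds ht)).exists
  exact ⟨-(n:ℝ), hn⟩

lemma F_strict {a : Fin 2 → ℝ} (ha : a ≠ 0) : ∀ x y : ℝ, x < y → F a x < F a y := by
  intro x y hxy
  have hpos : 0 < (stdGaussian2 (dot a ⁻¹' Set.Ioo x y)).toReal := by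
    apply ENNReal.toReal_pos _ (measure_ne_top _ _)
    refine (stdGaussian2_pos_of_isOpen ?_ ?_).ne'
    · exact isOpen_Ioo.preimage (continuous_dot a)
    · obtain ⟨u, hu⟩ := exists_dot_eq ha ((x + y) / 2)
      refine ⟨u, ?_⟩
      simp only [Set.mem_preimage, Set.mem_Ioo, hu]
      constructor <;> linarith
  have := toReal_add_le (S := {u | dot a u ≤ x}) (T := dot a ⁻¹' Set.Ioo x y)
    (U := {u | dot a u ≤ y})
    (((measurable_dot a) measurableSet_Ioo))
    (by
      rw [Set.disjoint_left]
      intro u hu hu2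
      exact absurd hu2.1 (not_lt.mpr hu))
    (by
      rintro u (hu | hu)
      · exact le_trans hu hxy.le
      · exact hu.2.le)
  unfold F
  linarith

lemma psi_mono (a b : Fin 2 → ℝ) {w w' : ℝ × ℝ} (h1 : w.1 ≤ w'.1) (h2 : w.2 ≤ w'.2) :
    psi a b w ≤ psi a b w' := by
  refine ENNReal.toReal_mono (measure_ne_top _ _) (measure_mono ?_)
  intro u hu; exact ⟨hu.1.trans h1, hu.2.trans h2⟩

lemma psi_nonneg (a b : Fin 2 → ℝ) (w : ℝ × ℝ) : 0 ≤ psi a b w := ENNReal.toReal_nonneg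

lemma dot_zero (u : Fin 2 → ℝ) : dot 0 u = 0 := by simp [dot]

lemma F_zero_fun (x : ℝ) : F 0 x = if 0 ≤ x then 1 else 0 := by
  unfold F
  by_cases hx : 0 ≤ x
  · rw [if_pos hx]
    have : {u : Fin 2 → ℝ | dot 0 u ≤ x} = Set.univ := by
      ext u; simp [dot_zero, hx]
    rw [this, measure_univ, ENNReal.toReal_one]
  · rw [if_neg hx]
    have : {u : Fin 2 → ℝ | dot 0 u ≤ x} = ∅ := by
      ext u; simp [dot_zero]; linarith [not_le.mp hx]
    rw [this, measure_empty, ENNReal.toReal_zero]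

lemma psi_a_zero (b : Fin 2 → ℝ) (w : ℝ × ℝ) :
    psi 0 b w = if 0 ≤ w.1 then F b w.2 else 0 := by
  unfold psi box F
  by_cases h : 0 ≤ w.1
  · rw [if_pos h]
    have hs : {u : Fin 2 → ℝ | dot 0 u ≤ w.1 ∧ dot b u ≤ w.2} = {u | dot b u ≤ w.2} := by
      ext u; simp [dot_zero, h]
    rw [hs]
  · rw [if_neg h]
    have : {u : Fin 2 → ℝ | dot 0 u ≤ w.1 ∧ dot b u ≤ w.2} = ∅ := by
      ext u; simp [dot_zero]; intro hh; linarith [not_le.mp h]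
    rw [this, measure_empty, ENNReal.toReal_zero]

lemma psi_b_zero (a : Fin 2 → ℝ) (w : ℝ × ℝ) :
    psi a 0 w = if 0 ≤ w.2 then F a w.1 else 0 := by
  unfold psi box F
  by_cases h : 0 ≤ w.2
  · rw [if_pos h]
    have hs : {u : Fin 2 → ℝ | dot a u ≤ w.1 ∧ dot 0 u ≤ w.2} = {u | dot a u ≤ w.1} := by
      ext u; simp [dot_zero, h]
    rw [hs]
  · rw [if_neg h]
    have : {u : Fin 2 → ℝ | dot a u ≤ w.1 ∧ dot 0 u ≤ w.2} = ∅ := by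
      ext u; simp [dot_zero]; intro hh; linarith [not_le.mp h]
    rw [this, measure_empty, ENNReal.toReal_zero]

lemma dot_smul (lam : ℝ) (a u : Fin 2 → ℝ) : dot (fun i => lam * a i) u = lam * dot a u := by
  simp [dot]; ring

lemma psi_comonotone {a : Fin 2 → ℝ} {lam : ℝ} (hlam : 0 < lam) (w : ℝ × ℝ) :
    psi a (fun i => lam * a i) w = F a (min w.1 (w.2 / lam)) := by
  unfold psi box F
  have hs : {u | dot a u ≤ w.1 ∧ dot (fun i => lam * a i) u ≤ w.2}
      = {u | dot a u ≤ min w.1 (w.2 / lam)} := by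
    ext u
    simp only [Set.mem_setOf_eq, dot_smul, le_min_iff]
    constructor
    · rintro ⟨h1, h2⟩; exact ⟨h1, (le_div_iff₀ hlam).mpr (by linarith)⟩
    · rintro ⟨h1, h2⟩; exact ⟨h1, by have := (le_div_iff₀ hlam).mp h2; linarith⟩
  rw [hs]

/-- measure of the closed interval region for `dot a` -/
lemma measure_dot_Icc {a : Fin 2 → ℝ} (ha : a ≠ 0) {q p : ℝ} (hqp : q ≤ p) :
    (stdGaussian2 {u | q ≤ dot a u ∧ dot a u ≤ p}).toReal = F a p - F a q := by
  have hlt : stdGaussian2 {u | dot a u < q} = stdGaussian2 {u | dot a u ≤ q} := by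
    apply le_antisymm
    · exact measure_mono (Set.setOf_subset_setOf.mpr (fun u => le_of_lt))
    · calc stdGaussian2 {u | dot a u ≤ q}
          ≤ stdGaussian2 ({u | dot a u < q} ∪ {u | dot a u = q}) := by
            apply measure_mono; intro u hu
            simp only [Set.mem_setOf_eq] at hu
            rcases lt_or_eq_of_le hu with h | h
            · exact Or.inl h
            · exact Or.inr h
        _ ≤ stdGaussian2 {u | dot a u < q} + stdGaussian2 {u | dot a u = q} :=
            measure_union_le _ _
        _ = stdGaussian2 {u | dot a u < q} := by
            rw [stdGaussian2_hyperplane ha, add_zero]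
  have hsplit : stdGaussian2 {u | dot a u ≤ p}
      = stdGaussian2 {u | dot a u < q} + stdGaussian2 {u | q ≤ dot a u ∧ dot a u ≤ p} := by
    rw [← measure_union ?_ ?_]
    · congr 1
      ext u
      simp only [Set.mem_union, Set.mem_setOf_eq]
      constructor
      · intro hu; rcases lt_or_ge (dot a u) q with h | h
        · exact Or.inl h
        · exact Or.inr ⟨h, hu⟩
      · rintro (hu | hu)
        · linarith
        · exact hu.2
    · rw [Set.disjoint_left]; intro u hu hu2; exact absurd hu2.1 (not_le.mpr hu)
    · exact (measurable_dot a measurableSet_Ici).inter (measurable_dot a measurableSet_Iic)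
  have := congrArg ENNReal.toReal hsplit
  rw [ENNReal.toReal_add (measure_ne_top _ _) (measure_ne_top _ _)] at this
  rw [hlt] at this
  unfold F
  linarith

lemma psi_anticomonotone {a : Fin 2 → ℝ} (ha : a ≠ 0) {lam : ℝ} (hlam : lam < 0) (w : ℝ × ℝ) :
    psi a (fun i => lam * a i) w
      = if w.2 / lam ≤ w.1 then F a w.1 - F a (w.2 / lam) else 0 := by
  have hbox : box a (fun i => lam * a i) w = {u | w.2 / lam ≤ dot a u ∧ dot a u ≤ w.1} := by
    ext u
    simp only [box, Set.mem_setOf_eq, dot_smul]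
    constructor
    · rintro ⟨h1, h2⟩
      exact ⟨(div_le_iff_of_neg hlam).mpr (by linarith), h1⟩
    · rintro ⟨h1, h2⟩
      refine ⟨h2, ?_⟩
      have := (div_le_iff_of_neg hlam).mp h1
      linarith
  by_cases h : w.2 / lam ≤ w.1
  · rw [if_pos h]
    unfold psi
    rw [hbox]
    exact measure_dot_Icc ha h
  · rw [if_neg h]
    unfold psi
    rw [hbox]
    have : {u | w.2 / lam ≤ dot a u ∧ dot a u ≤ w.1} = ∅ := by
      ext u
      simp only [Set.mem_setOf_eq, Set.mem_empty_iff_false, iff_false, not_and]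
      intro h1 h2
      exact h (le_trans h1 h2)
    rw [this, measure_empty, ENNReal.toReal_zero]

lemma psi_le_F1 (a b : Fin 2 → ℝ) (w : ℝ × ℝ) : psi a b w ≤ F a w.1 :=
  ENNReal.toReal_mono (measure_ne_top _ _) (measure_mono (fun u hu => hu.1))

lemma psi_le_F2 (a b : Fin 2 → ℝ) (w : ℝ × ℝ) : psi a b w ≤ F b w.2 :=
  ENNReal.toReal_mono (measure_ne_top _ _) (measure_mono (fun u hu => hu.2))

lemma psi_ge_sum (a b : Fin 2 → ℝ) (w : ℝ × ℝ) :
    F a w.1 + F b w.2 - 1 ≤ psi a b w := by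
  have h := measure_union_add_inter (μ := stdGaussian2) ({u | dot a u ≤ w.1})
    (show MeasurableSet {u : Fin 2 → ℝ | dot b u ≤ w.2} from
      measurable_dot b measurableSet_Iic)
  have h1 : stdGaussian2 ({u | dot a u ≤ w.1} ∪ {u | dot b u ≤ w.2}) ≤ 1 := prob_le_one
  have h2 := congrArg ENNReal.toReal h
  rw [ENNReal.toReal_add (measure_ne_top _ _) (measure_ne_top _ _),
    ENNReal.toReal_add (measure_ne_top _ _) (measure_ne_top _ _)] at h2
  have h3 : (stdGaussian2 ({u | dot a u ≤ w.1} ∪ {u | dot b u ≤ w.2})).toReal ≤ 1 := by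
    rw [← ENNReal.toReal_one]
    exact ENNReal.toReal_mono (by simp) h1
  unfold F psi box
  have : ({u | dot a u ≤ w.1} ∩ {u | dot b u ≤ w.2}) = {u | dot a u ≤ w.1 ∧ dot b u ≤ w.2} := rfl
  rw [this] at h2
  linarith

/-- On a compact interval, a strictly increasing monotone function gains a uniform
amount `g` when its argument increases by `γ`. -/
lemma gain_lemma {f : ℝ → ℝ} (hmono : Monotone f)
    (hstrict : ∀ x y : ℝ, x < y → f x < f y) {q M γ : ℝ} (hγ : 0 < γ) :
    ∃ g > 0, ∀ x, q ≤ x → x ≤ M → f x + g ≤ f (x + γ) := by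
  set h := γ / 2 with hh
  have hh0 : 0 < h := by positivity
  set J := Nat.floor ((M - q) / h) with hJ
  have hne : (Finset.range (J + 1)).Nonempty := ⟨0, by simp⟩
  set g := (Finset.range (J + 1)).inf' hne
    (fun j => f (q + (j + 2) * h) - f (q + (j + 1) * h)) with hg
  have hgpos : 0 < g := by
    rw [hg, Finset.lt_inf'_iff]
    intro j _
    have : q + (j + 1) * h < q + (j + 2) * h := by nlinarith
    linarith [hstrict _ _ this]
  refine ⟨g, hgpos, fun x hqx hxM => ?_⟩
  set j := Nat.floor ((x - q) / h) with hj
  have hxq0 : 0 ≤ (x - q) / h := div_nonneg (by linarith) hh0.le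
  have hjle : (j : ℝ) ≤ (x - q) / h := Nat.floor_le hxq0
  have hjlt : (x - q) / h < j + 1 := Nat.lt_floor_add_one _
  have hjJ : j ≤ J := Nat.floor_le_floor ((div_le_div_iff_of_pos_right hh0).mpr (by linarith))
  have hmem : j ∈ Finset.range (J + 1) := Finset.mem_range.mpr (Nat.lt_succ_of_le hjJ)
  have h1 : q + (j : ℝ) * h ≤ x := by
    have := (le_div_iff₀ hh0).mp hjle
    linarith
  have h2 : x ≤ q + ((j : ℝ) + 1) * h := by
    have := (div_lt_iff₀ hh0).mp hjlt
    linarith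
  have key : f (q + ((j : ℝ) + 1) * h) + g ≤ f (q + ((j : ℝ) + 2) * h) := by
    have := Finset.inf'_le (fun j : ℕ => f (q + (j + 2) * h) - f (q + (j + 1) * h)) hmem
    rw [← hg] at this
    linarith
  have h3 : f x ≤ f (q + ((j : ℝ) + 1) * h) := hmono h2
  have h4 : f (q + ((j : ℝ) + 2) * h) ≤ f (x + γ) := by
    apply hmono
    have : γ = 2 * h := by rw [hh]; ring
    linarith
  linarith

/-- 1D gap lemma. -/
lemma gap1D {f : ℝ → ℝ} (hmono : Monotone f)
    (hstrict : ∀ x y : ℝ, x < y → f x < f y)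
    {t γ : ℝ} (ht0 : 0 < t) (ht1 : t < 1) (hγ : 0 < γ)
    (hhi : ∃ M, t < f M) (hlo : ∃ q, f q < t) :
    ∃ c > 0, ∀ x, t - c ≤ f x → t + c ≤ f (x + γ) := by
  obtain ⟨M, hM⟩ := hhi
  obtain ⟨q, hq⟩ := hlo
  obtain ⟨g, hg0, hgain⟩ := gain_lemma hmono hstrict (q := q) (M := M) hγ
  refine ⟨min ((t - f q) / 2) (min (f M - t) (g / 2)), by
    apply lt_min (by linarith) (lt_min (by linarith) (by linarith)), fun x hx => ?_⟩
  set c := min ((t - f q) / 2) (min (f M - t) (g / 2)) with hc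
  have hc1 : c ≤ (t - f q) / 2 := min_le_left _ _
  have hc2 : c ≤ f M - t := (min_le_right _ _).trans (min_le_left _ _)
  have hc3 : c ≤ g / 2 := (min_le_right _ _).trans (min_le_right _ _)
  have hxq : q ≤ x := by
    by_contra hcon
    push_neg at hcon
    have := hmono hcon.le
    linarith
  by_cases hxM : x ≤ M
  · have := hgain x hxq hxM
    linarith
  · push_neg at hxM
    have h1 : f M ≤ f x := hmono hxM.le
    have h2 : f x ≤ f (x + γ) := hmono (by linarith)
    linarith

lemma psi_strict_fst {a b : Fin 2 → ℝ}
    (hsolv : ∀ s1 s2 : ℝ, ∃ u, dot a u = s1 ∧ dot b u = s2) (s : ℝ) :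
    ∀ x y : ℝ, x < y → psi a b (x, s) < psi a b (y, s) := by
  intro x y hxy
  set T : Set (Fin 2 → ℝ) := {u | x < dot a u} ∩ ({u | dot a u < y} ∩ {u | dot b u < s}) with hT
  have hTopen : IsOpen T := by
    refine IsOpen.inter ?_ (IsOpen.inter ?_ ?_)
    · exact isOpen_lt continuous_const (continuous_dot a)
    · exact isOpen_lt (continuous_dot a) continuous_const
    · exact isOpen_lt (continuous_dot b) continuous_const
  have hTne : T.Nonempty := by
    obtain ⟨u, hu1, hu2⟩ := hsolv ((x + y) / 2) (s - 1)
    refine ⟨u, ?_, ?_, ?_⟩ <;> simp only [Set.mem_setOf_eq, hu1, hu2] <;> linarith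
  have hTpos : 0 < (stdGaussian2 T).toReal :=
    ENNReal.toReal_pos (stdGaussian2_pos_of_isOpen hTopen hTne).ne' (measure_ne_top _ _)
  have := toReal_add_le (S := box a b (x, s)) (T := T) (U := box a b (y, s))
    (hTopen.measurableSet)
    (by
      rw [Set.disjoint_left]
      rintro u ⟨hu1, _⟩ ⟨hu2, _⟩
      exact absurd hu2 (not_lt.mpr hu1))
    (by
      rintro u (hu | ⟨hu1, hu2, hu3⟩)
      · exact ⟨hu.1.trans hxy.le, hu.2⟩
      · exact ⟨le_of_lt hu2, le_of_lt hu3⟩)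
  unfold psi
  linarith

lemma psi_strict_snd {a b : Fin 2 → ℝ}
    (hsolv : ∀ s1 s2 : ℝ, ∃ u, dot a u = s1 ∧ dot b u = s2) (s : ℝ) :
    ∀ x y : ℝ, x < y → psi a b (s, x) < psi a b (s, y) := by
  intro x y hxy
  set T : Set (Fin 2 → ℝ) := {u | x < dot b u} ∩ ({u | dot b u < y} ∩ {u | dot a u < s}) with hT
  have hTopen : IsOpen T := by
    refine IsOpen.inter ?_ (IsOpen.inter ?_ ?_)
    · exact isOpen_lt continuous_const (continuous_dot b)
    · exact isOpen_lt (continuous_dot b) continuous_const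
    · exact isOpen_lt (continuous_dot a) continuous_const
  have hTne : T.Nonempty := by
    obtain ⟨u, hu1, hu2⟩ := hsolv (s - 1) ((x + y) / 2)
    refine ⟨u, ?_, ?_, ?_⟩ <;> simp only [Set.mem_setOf_eq, hu1, hu2] <;> linarith
  have hTpos : 0 < (stdGaussian2 T).toReal :=
    ENNReal.toReal_pos (stdGaussian2_pos_of_isOpen hTopen hTne).ne' (measure_ne_top _ _)
  have := toReal_add_le (S := box a b (s, x)) (T := T) (U := box a b (s, y))
    (hTopen.measurableSet)
    (by
      rw [Set.disjoint_left]
      rintro u ⟨_, hu1⟩ ⟨hu2, _⟩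
      exact absurd hu2 (not_lt.mpr hu1))
    (by
      rintro u (hu | ⟨hu1, hu2, hu3⟩)
      · exact ⟨hu.1, hu.2.trans hxy.le⟩
      · exact ⟨le_of_lt hu3, le_of_lt hu2⟩)
  unfold psi
  linarith

lemma psi_strip_fst (a b : Fin 2 → ℝ) {qb : ℝ} {w : ℝ × ℝ} (hqb : qb ≤ w.2) {γ : ℝ}
    (hγ : 0 < γ) :
    psi a b w + (psi a b (w.1 + γ, qb) - psi a b (w.1, qb))
      ≤ psi a b (w.1 + γ, w.2 + γ) := by
  set D := box a b (w.1 + γ, qb) \ box a b (w.1, qb) with hD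
  have hsub : box a b (w.1, qb) ⊆ box a b (w.1 + γ, qb) := by
    intro u hu
    simp only [box, Set.mem_setOf_eq] at hu ⊢
    exact ⟨hu.1.trans (by linarith), hu.2⟩
  have hμD : (stdGaussian2 D).toReal = psi a b (w.1 + γ, qb) - psi a b (w.1, qb) := by
    rw [hD, measure_diff hsub ((measurableSet_box a b (w.1, qb)).nullMeasurableSet)
      (measure_ne_top _ _)]
    rw [ENNReal.toReal_sub_of_le (measure_mono hsub) (measure_ne_top _ _)]
    rfl
  have := toReal_add_le (S := box a b w) (T := D)
    (U := box a b (w.1 + γ, w.2 + γ))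
    ((measurableSet_box a b _).diff (measurableSet_box a b _))
    (by
      rw [Set.disjoint_left]
      rintro u hu ⟨hu2, hu3⟩
      simp only [box, Set.mem_setOf_eq] at hu hu2 hu3
      exact hu3 ⟨le_trans (le_of_not_gt (fun hlt => hu3 ⟨hu.1, hu2.2⟩)) hu.1, hu2.2⟩)
    (by
      rintro u (hu | ⟨hu1, _⟩)
      · simp only [box, Set.mem_setOf_eq] at hu ⊢
        exact ⟨hu.1.trans (by linarith), hu.2.trans (by linarith)⟩
      · simp only [box, Set.mem_setOf_eq] at hu1 ⊢
        exact ⟨hu1.1, hu1.2.trans (by linarith)⟩)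
  unfold psi at hμD this ⊢
  linarith

lemma psi_strip_snd (a b : Fin 2 → ℝ) {qa : ℝ} {w : ℝ × ℝ} (hqa : qa ≤ w.1) {γ : ℝ}
    (hγ : 0 < γ) :
    psi a b w + (psi a b (qa, w.2 + γ) - psi a b (qa, w.2))
      ≤ psi a b (w.1 + γ, w.2 + γ) := by
  set D := box a b (qa, w.2 + γ) \ box a b (qa, w.2) with hD
  have hsub : box a b (qa, w.2) ⊆ box a b (qa, w.2 + γ) := by
    intro u hu
    simp only [box, Set.mem_setOf_eq] at hu ⊢
    exact ⟨hu.1, hu.2.trans (by linarith)⟩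
  have hμD : (stdGaussian2 D).toReal = psi a b (qa, w.2 + γ) - psi a b (qa, w.2) := by
    rw [hD, measure_diff hsub ((measurableSet_box a b (qa, w.2)).nullMeasurableSet)
      (measure_ne_top _ _)]
    rw [ENNReal.toReal_sub_of_le (measure_mono hsub) (measure_ne_top _ _)]
    rfl
  have := toReal_add_le (S := box a b w) (T := D)
    (U := box a b (w.1 + γ, w.2 + γ))
    ((measurableSet_box a b _).diff (measurableSet_box a b _))
    (by
      rw [Set.disjoint_left]
      rintro u hu ⟨hu2, hu3⟩
      simp only [box, Set.mem_setOf_eq] at hu hu2 hu3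
      exact hu3 ⟨hu2.1, le_trans (le_of_not_gt (fun hlt => hu3 ⟨hu2.1, hu.2⟩)) hu.2⟩)
    (by
      rintro u (hu | ⟨hu1, _⟩)
      · simp only [box, Set.mem_setOf_eq] at hu ⊢
        exact ⟨hu.1.trans (by linarith), hu.2.trans (by linarith)⟩
      · simp only [box, Set.mem_setOf_eq] at hu1 ⊢
        exact ⟨hu1.1.trans (by linarith), hu1.2⟩)
  unfold psi at hμD this ⊢
  linarith

/-- 1D gap lemma for `F b`, any `b` (including `b = 0`). -/
lemma gapF (b : Fin 2 → ℝ) {t γ : ℝ} (ht0 : 0 < t) (ht1 : t < 1) (hγ : 0 < γ) :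
    ∃ c > 0, ∀ x, t - c ≤ F b x → t + c ≤ F b (x + γ) := by
  by_cases hb : b = 0
  · subst hb
    refine ⟨min t (1 - t) / 2, by
      have h1 : 0 < min t (1 - t) := lt_min ht0 (by linarith)
      positivity, fun x hx => ?_⟩
    rw [F_zero_fun] at hx ⊢
    have hmin1 : min t (1 - t) / 2 ≤ t / 2 := by
      have := min_le_left t (1 - t); linarith
    have hmin2 : min t (1 - t) / 2 ≤ (1 - t) / 2 := by
      have := min_le_right t (1 - t); linarith
    by_cases h0 : 0 ≤ x
    · rw [if_pos (by linarith : (0:ℝ) ≤ x + γ)]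
      linarith
    · rw [if_neg h0] at hx
      linarith
  · exact gap1D (F_mono b) (F_strict hb) ht0 ht1 hγ (exists_F_gt b ht1) (exists_F_lt b ht0)

lemma gap2D (a b : Fin 2 → ℝ) {t γ : ℝ} (ht0 : 0 < t) (ht1 : t < 1) (hγ : 0 < γ) :
    ∃ c > 0, ∀ w : ℝ × ℝ, t - c ≤ psi a b w → t + c ≤ psi a b (w.1 + γ, w.2 + γ) := by
  by_cases ha : a = 0
  · -- first row zero
    subst ha
    obtain ⟨c, hc, hgap⟩ := gapF b ht0 ht1 hγ
    refine ⟨min c (t / 2), lt_min hc (by linarith), fun w hw => ?_⟩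
    rw [psi_a_zero] at hw
    rw [psi_a_zero]
    by_cases h1 : 0 ≤ w.1
    · rw [if_pos h1] at hw
      rw [if_pos (show (0:ℝ) ≤ (w.1 + γ, w.2 + γ).1 by dsimp only; linarith)]
      have h2 : t - c ≤ F b w.2 := by
        have := min_le_left c (t / 2); linarith
      have := hgap w.2 h2
      have hm : min c (t / 2) ≤ c := min_le_left _ _
      dsimp only
      linarith
    · rw [if_neg h1] at hw
      have := min_le_right c (t / 2)
      linarith
  · by_cases hb : b = 0
    · -- second row zero
      subst hb
      obtain ⟨c, hc, hgap⟩ := gapF a ht0 ht1 hγ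
      refine ⟨min c (t / 2), lt_min hc (by linarith), fun w hw => ?_⟩
      rw [psi_b_zero] at hw
      rw [psi_b_zero]
      by_cases h1 : 0 ≤ w.2
      · rw [if_pos h1] at hw
        rw [if_pos (show (0:ℝ) ≤ (w.1 + γ, w.2 + γ).2 by dsimp only; linarith)]
        have h2 : t - c ≤ F a w.1 := by
          have := min_le_left c (t / 2); linarith
        have := hgap w.1 h2
        have hm : min c (t / 2) ≤ c := min_le_left _ _
        dsimp only
        linarith
      · rw [if_neg h1] at hw
        have := min_le_right c (t / 2)
        linarith
    · by_cases hdet : a 0 * b 1 - a 1 * b 0 = 0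
      · -- dependent rows, both nonzero
        have hdep : ∃ lam : ℝ, lam ≠ 0 ∧ b = fun i => lam * a i := by
          by_cases h0 : a 0 ≠ 0
          · refine ⟨b 0 / a 0, ?_, ?_⟩
            · intro h
              apply hb
              have hb0 : b 0 = 0 := by
                field_simp at h; simpa using h
              have hb1 : b 1 = 0 := by
                have : a 0 * b 1 = a 1 * b 0 := by linarith
                rw [hb0] at this
                have := mul_eq_zero.mp (by linarith : a 0 * b 1 = 0)
                tauto
              funext i; fin_cases i <;> simp [hb0, hb1]
            · funext i
              fin_cases i
              · simp; field_simp
              · simp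
                field_simp
                linarith
          · push_neg at h0
            have h1 : a 1 ≠ 0 := by
              intro h1; apply ha; funext i; fin_cases i <;> simp [h0, h1]
            refine ⟨b 1 / a 1, ?_, ?_⟩
            · intro h
              apply hb
              have hb1 : b 1 = 0 := by field_simp at h; simpa using h
              have hb0 : b 0 = 0 := by
                rw [h0] at hdet
                simp at hdet
                rcases hdet with h | h
                · exact absurd h h1
                · exact h
              funext i; fin_cases i <;> simp [hb0, hb1]
            · funext i
              fin_cases i
              · simp
                rw [h0] at hdet ⊢
                simp at hdet
                rcases hdet with h | h
                · exact absurd h h1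
                · rw [h]; ring
              · simp; field_simp
        obtain ⟨lam, hlam0, hblam⟩ := hdep
        rcases lt_or_gt_of_ne hlam0 with hneg | hpos
        · -- lam < 0 : anti-comonotone case
          have hr0 : 0 < min t (1 - t) / 4 := by
            have := lt_min ht0 (by linarith : (0:ℝ) < 1 - t)
            positivity
          set r := min t (1 - t) / 4 with hr
          have hrt : r < t := by
            have := min_le_left t (1 - t); rw [hr]; linarith
          have hr1t : r ≤ (1 - t) / 4 := by
            have := min_le_right t (1 - t); rw [hr]; linarith
          obtain ⟨q₁, hq₁⟩ := exists_F_lt a hr0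
          obtain ⟨P₁, hP₁⟩ := exists_F_gt a (show (1 + t) / 2 < 1 by linarith)
          obtain ⟨P₂, hP₂⟩ := exists_F_gt a (show 1 - t / 2 < 1 by linarith)
          set γ'' := γ / (-lam) with hγ''
          have hγ''0 : 0 < γ'' := by
            rw [hγ'']
            apply div_pos hγ
            linarith
          obtain ⟨g₁, hg₁0, hg₁⟩ := gain_lemma (F_mono a) (F_strict ha)
            (q := q₁) (M := P₁) hγ
          obtain ⟨g₂, hg₂0, hg₂⟩ := gain_lemma (F_mono a) (F_strict ha)
            (q := q₁ - γ'') (M := P₂) hγ''0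
          set c := min (min ((t - r) / 2) ((1 - t) / 8)) (min (t / 4) (min (g₁ / 2) (g₂ / 2)))
            with hcdef
          have hc0 : 0 < c := by
            refine lt_min (lt_min (by linarith) (by linarith))
              (lt_min (by linarith) (lt_min (by linarith) (by linarith)))
          have hc1 : c ≤ (t - r) / 2 := le_trans (min_le_left _ _) (min_le_left _ _)
          have hc2 : c ≤ (1 - t) / 8 := le_trans (min_le_left _ _) (min_le_right _ _)
          have hc3 : c ≤ t / 4 := le_trans (min_le_right _ _) (min_le_left _ _)
          have hc4 : c ≤ g₁ / 2 :=
            le_trans (min_le_right _ _) (le_trans (min_le_right _ _) (min_le_left _ _))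
          have hc5 : c ≤ g₂ / 2 :=
            le_trans (min_le_right _ _) (le_trans (min_le_right _ _) (min_le_right _ _))
          refine ⟨c, hc0, fun w hw => ?_⟩
          rw [hblam] at hw ⊢
          rw [psi_anticomonotone ha hneg] at hw
          rw [psi_anticomonotone ha hneg]
          by_cases hcond : w.2 / lam ≤ w.1
          · rw [if_pos hcond] at hw
            set p := w.1 with hp
            set q := w.2 / lam with hq
            have hcond2 : ((w.1 + γ, w.2 + γ).2 : ℝ) / lam ≤ (w.1 + γ, w.2 + γ).1 := by
              dsimp only
              rw [add_div]
              have : γ / lam < 0 := div_neg_of_pos_of_neg hγ hneg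
              linarith
            rw [if_pos hcond2]
            dsimp only
            have hqγ : (w.2 + γ) / lam = q - γ'' := by
              rw [hq, hγ'', add_div, div_neg, sub_neg_eq_add]
            rw [hqγ]
            -- main case analysis
            by_cases hFp : F a p ≤ (1 + t) / 2
            · -- bounded right endpoint
              have hpq₁ : q₁ ≤ p := by
                by_contra hcon
                push_neg at hcon
                have := F_mono a hcon.le
                have hFq : 0 ≤ F a q := F_nonneg a q
                linarith
              have hpP₁ : p ≤ P₁ := by
                by_contra hcon
                push_neg at hcon
                have := F_mono a hcon.le
                linarith
              have := hg₁ p hpq₁ hpP₁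
              have hFmono : F a (q - γ'') ≤ F a q := F_mono a (by linarith)
              linarith
            · push_neg at hFp
              by_cases hFq : F a q ≤ r
              · -- tiny left tail
                have h1 : F a p ≤ F a (p + γ) := F_mono a (by linarith)
                have h2 : F a (q - γ'') ≤ F a q := F_mono a (by linarith)
                linarith
              · push_neg at hFq
                have hqq₁ : q₁ ≤ q := by
                  by_contra hcon
                  push_neg at hcon
                  have := F_mono a hcon.le
                  linarith
                have hqP₂ : q - γ'' ≤ P₂ := by
                  have hFple : F a p ≤ 1 := F_le_one a p
                  have : F a q ≤ 1 - t + c := by linarith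
                  by_contra hcon
                  push_neg at hcon
                  have h1 : F a P₂ ≤ F a (q - γ'') := F_mono a hcon.le
                  have h2 : F a (q - γ'') ≤ F a q := F_mono a (by linarith)
                  linarith
                have := hg₂ (q - γ'') (by linarith) hqP₂
                rw [sub_add_cancel] at this
                have h1 : F a p ≤ F a (p + γ) := F_mono a (by linarith)
                linarith
          · rw [if_neg hcond] at hw
            linarith
        · -- lam > 0 : comonotone case
          set γ' := min γ (γ / lam) with hγ'
          have hγ'0 : 0 < γ' := lt_min hγ (by positivity)
          obtain ⟨c, hc0, hgap⟩ := gap1D (F_mono a) (F_strict ha) ht0 ht1 hγ'0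
            (exists_F_gt a ht1) (exists_F_lt a ht0)
          refine ⟨c, hc0, fun w hw => ?_⟩
          rw [hblam] at hw ⊢
          rw [psi_comonotone hpos] at hw
          rw [psi_comonotone hpos]
          have := hgap _ hw
          refine le_trans this (F_mono a ?_)
          dsimp only
          rw [add_div]
          refine le_min ?_ ?_
          · have h1 : min w.1 (w.2 / lam) ≤ w.1 := min_le_left _ _
            have h2 : γ' ≤ γ := min_le_left _ _
            linarith
          · have h1 : min w.1 (w.2 / lam) ≤ w.2 / lam := min_le_right _ _
            have h2 : γ' ≤ γ / lam := min_le_right _ _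
            linarith
      · -- independent rows
        have hsolv : ∀ s1 s2 : ℝ, ∃ u, dot a u = s1 ∧ dot b u = s2 := by
          intro s1 s2
          set d := a 0 * b 1 - a 1 * b 0 with hd
          refine ⟨fun i => if i = 0 then (s1 * b 1 - s2 * a 1) / d
            else (s2 * a 0 - s1 * b 0) / d, ?_, ?_⟩
          · show a 0 * _ + a 1 * _ = s1
            simp only [if_pos (show (0 : Fin 2) = 0 from rfl), if_neg (by norm_num : (1 : Fin 2) ≠ 0)]
            field_simp
            simp only [if_true]
            field_simp
            ring
          · show b 0 * _ + b 1 * _ = s2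
            simp only [if_pos (show (0 : Fin 2) = 0 from rfl), if_neg (by norm_num : (1 : Fin 2) ≠ 0)]
            field_simp
            simp only [if_true]
            field_simp
            ring
        have hr0 : 0 < min t (1 - t) / 4 := by
          have := lt_min ht0 (by linarith : (0:ℝ) < 1 - t)
          positivity
        set r := min t (1 - t) / 4 with hr
        have hrt : r < t := by
          have := min_le_left t (1 - t); rw [hr]; linarith
        have hr1t : r ≤ (1 - t) / 4 := by
          have := min_le_right t (1 - t); rw [hr]; linarith
        set s₅ := (1 + t) / 2 + (1 - t) / 8 with hs₅
        have hs₅1 : s₅ < 1 := by rw [hs₅]; linarith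
        obtain ⟨qa, hqa⟩ := exists_F_lt a hr0
        obtain ⟨qb, hqb⟩ := exists_F_lt b hr0
        obtain ⟨Ma, hMa⟩ := exists_F_gt a hs₅1
        obtain ⟨Mb, hMb⟩ := exists_F_gt b hs₅1
        obtain ⟨g₁, hg₁0, hg₁⟩ := gain_lemma
          (f := fun x => psi a b (x, qb))
          (fun x y hxy => psi_mono a b hxy le_rfl)
          (psi_strict_fst hsolv qb) (q := qa) (M := Ma) hγ
        obtain ⟨g₂, hg₂0, hg₂⟩ := gain_lemma
          (f := fun y => psi a b (qa, y))
          (fun x y hxy => psi_mono a b le_rfl hxy)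
          (psi_strict_snd hsolv qa) (q := qb) (M := Mb) hγ
        set c := min (min ((t - r) / 2) ((1 - t) / 8)) (min (g₁ / 2) (g₂ / 2)) with hcdef
        have hc0 : 0 < c :=
          lt_min (lt_min (by linarith) (by linarith)) (lt_min (by linarith) (by linarith))
        have hc1 : c ≤ (t - r) / 2 := le_trans (min_le_left _ _) (min_le_left _ _)
        have hc2 : c ≤ (1 - t) / 8 := le_trans (min_le_left _ _) (min_le_right _ _)
        have hc3 : c ≤ g₁ / 2 := le_trans (min_le_right _ _) (min_le_left _ _)
        have hc4 : c ≤ g₂ / 2 := le_trans (min_le_right _ _) (min_le_right _ _)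
        refine ⟨c, hc0, fun w hw => ?_⟩
        have hw1qa : qa ≤ w.1 := by
          by_contra hcon
          push_neg at hcon
          have h1 : psi a b w ≤ F a w.1 := psi_le_F1 a b w
          have h2 : F a w.1 ≤ F a qa := F_mono a hcon.le
          linarith
        have hw2qb : qb ≤ w.2 := by
          by_contra hcon
          push_neg at hcon
          have h1 : psi a b w ≤ F b w.2 := psi_le_F2 a b w
          have h2 : F b w.2 ≤ F b qb := F_mono b hcon.le
          linarith
        by_cases hbig : t + c ≤ psi a b w
        · refine le_trans hbig (psi_mono a b ?_ ?_) <;> dsimp only <;> linarith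
        · push_neg at hbig
          have hsum : F a w.1 + F b w.2 ≤ 1 + t + c := by
            have := psi_ge_sum a b w
            linarith
          have hcases : F a w.1 ≤ s₅ ∨ F b w.2 ≤ s₅ := by
            by_contra hcon
            push_neg at hcon
            rw [hs₅] at hcon
            have h1 := hcon.1
            have h2 := hcon.2
            linarith
          rcases hcases with hcase | hcase
          · have hw1Ma : w.1 ≤ Ma := by
              by_contra hcon
              push_neg at hcon
              have := F_mono a hcon.le
              linarith
            have hgain := hg₁ w.1 hw1qa hw1Ma
            have hstrip := psi_strip_fst a b hw2qb hγ
            linarith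
          · have hw2Mb : w.2 ≤ Mb := by
              by_contra hcon
              push_neg at hcon
              have := F_mono b hcon.le
              linarith
            have hgain := hg₂ w.2 hw2qb hw2Mb
            have hstrip := psi_strip_snd a b hw1qa hγ
            linarith

lemma Psi_eq (V : Matrix (Fin 2) (Fin 2) ℝ) (hV : V.PosSemidef) (z : ℝ × ℝ) :
    Psi V z = psi (hV.sqrt 0) (hV.sqrt 1) z := by
  rw [Psi, dif_pos hV]
  change ((stdGaussian2.map (fun u => hV.sqrt.mulVec u)) {w | w 0 ≤ z.1 ∧ w 1 ≤ z.2}).toReal = _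
  have hm : Measurable (fun u => hV.sqrt.mulVec u) := by
    refine measurable_pi_lambda _ (fun i => ?_)
    have : (fun u : Fin 2 → ℝ => hV.sqrt.mulVec u i)
        = fun u => hV.sqrt i 0 * u 0 + hV.sqrt i 1 * u 1 := by
      funext u
      simp [Matrix.mulVec, dotProduct, Fin.sum_univ_two]
    rw [this]
    exact ((measurable_pi_apply 0).const_mul _).add ((measurable_pi_apply 1).const_mul _)
  rw [Measure.map_apply hm]
  · have hset : (fun u => hV.sqrt.mulVec u) ⁻¹' {w | w 0 ≤ z.1 ∧ w 1 ≤ z.2}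
        = box (hV.sqrt 0) (hV.sqrt 1) z := by
      ext u
      simp [box, dot, Matrix.mulVec, dotProduct, Fin.sum_univ_two, Set.mem_setOf_eq]
    rw [hset]; rfl
  · exact (measurableSet_Iic.preimage (measurable_pi_apply 0)).inter
      (measurableSet_Iic.preimage (measurable_pi_apply 1))

lemma measurableSet_tailSet (R : ℝ) : MeasurableSet (tailSet R) := by
  have : MeasurableSet {u : Fin 2 → ℝ | ∀ i, |u i| ≤ R} := by
    have : {u : Fin 2 → ℝ | ∀ i, |u i| ≤ R} = ⋂ i, {u | |u i| ≤ R} := by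
      ext u; simp
    rw [this]
    refine MeasurableSet.iInter (fun i => ?_)
    exact (measurable_pi_apply i).abs measurableSet_Iic
  exact this.compl

lemma exists_tail_small {η : ℝ} (hη : 0 < η) :
    ∃ R > 0, (stdGaussian2 (tailSet R)).toReal ≤ η := by
  have hm : Monotone (fun n : ℕ => {u : Fin 2 → ℝ | ∀ i, |u i| ≤ (n : ℝ)}) := by
    intro m n hmn u hu i
    exact le_trans (hu i) (Nat.cast_le.mpr hmn)
  have hU : (⋃ n : ℕ, {u : Fin 2 → ℝ | ∀ i, |u i| ≤ (n : ℝ)}) = Set.univ := by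
    ext u
    simp only [Set.mem_iUnion, Set.mem_setOf_eq, Set.mem_univ, iff_true]
    obtain ⟨n, hn⟩ := exists_nat_ge (max |u 0| |u 1|)
    refine ⟨n, fun i => ?_⟩
    fin_cases i
    · exact le_trans (le_max_left _ _) hn
    · exact le_trans (le_max_right _ _) hn
  have h := tendsto_measure_iUnion_atTop (μ := stdGaussian2) hm
  rw [hU, measure_univ] at h
  have h' : Filter.Tendsto
      (fun n : ℕ => (stdGaussian2 {u : Fin 2 → ℝ | ∀ i, |u i| ≤ (n : ℝ)}).toReal)
      Filter.atTop (nhds 1) := by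
    have := (ENNReal.tendsto_toReal (by simp : (1:ENNReal) ≠ ⊤)).comp h
    simpa [Function.comp_def] using this
  have h'' := h'.eventually (eventually_gt_nhds (show 1 - η < 1 by linarith))
  obtain ⟨n, hn⟩ := (h''.and (Filter.eventually_ge_atTop 1)).exists
  refine ⟨n, by exact_mod_cast hn.2, ?_⟩
  have hcompl : stdGaussian2 (tailSet n)
      = 1 - stdGaussian2 {u : Fin 2 → ℝ | ∀ i, |u i| ≤ (n : ℝ)} := by
    have hms : MeasurableSet {u : Fin 2 → ℝ | ∀ i, |u i| ≤ (n : ℝ)} := by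
      have h2 : {u : Fin 2 → ℝ | ∀ i, |u i| ≤ (n:ℝ)} = ⋂ i, {u | |u i| ≤ (n:ℝ)} := by
        ext u; simp
      rw [h2]
      exact MeasurableSet.iInter (fun i => (measurable_pi_apply i).abs measurableSet_Iic)
    have : tailSet (n : ℝ) = {u : Fin 2 → ℝ | ∀ i, |u i| ≤ (n : ℝ)}ᶜ := rfl
    rw [this, measure_compl hms (measure_ne_top _ _), measure_univ]
  rw [hcompl]
  rw [ENNReal.toReal_sub_of_le prob_le_one (by simp)]
  simp only [ENNReal.toReal_one]
  linarith [hn.1]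

/-- coupling estimate -/
lemma coupling {a b a' b' : Fin 2 → ℝ} {R γ' : ℝ}
    (hclose : ∀ u : Fin 2 → ℝ, (∀ i, |u i| ≤ R) →
      |dot a' u - dot a u| ≤ γ' ∧ |dot b' u - dot b u| ≤ γ')
    (w : ℝ × ℝ) :
    psi a b w - (stdGaussian2 (tailSet R)).toReal ≤ psi a' b' (w.1 + γ', w.2 + γ') := by
  have hsub : box a b w ⊆ box a' b' (w.1 + γ', w.2 + γ') ∪ tailSet R := by
    intro u hu
    by_cases hR : ∀ i, |u i| ≤ R
    · left
      obtain ⟨h1, h2⟩ := hclose u hR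
      simp only [box, Set.mem_setOf_eq] at hu ⊢
      constructor
      · have := abs_le.mp h1
        linarith [hu.1, this.1, this.2]
      · have := abs_le.mp h2
        linarith [hu.2, this.1, this.2]
    · right
      exact hR
  have h1 : stdGaussian2 (box a b w)
      ≤ stdGaussian2 (box a' b' (w.1 + γ', w.2 + γ')) + stdGaussian2 (tailSet R) :=
    le_trans (measure_mono hsub) (measure_union_le _ _)
  have h2 := ENNReal.toReal_mono (by
      exact ENNReal.add_ne_top.mpr ⟨measure_ne_top _ _, measure_ne_top _ _⟩) h1
  rw [ENNReal.toReal_add (measure_ne_top _ _) (measure_ne_top _ _)] at h2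
  unfold psi
  linarith

lemma sqrt_entry_bound {W : Matrix (Fin 2) (Fin 2) ℝ} (hW : W.PosSemidef) (i j : Fin 2) :
    |hW.sqrt i j| ≤ Real.sqrt (W 0 0 + W 1 1) := by
  set A := hW.sqrt with hA
  have hsym : A 1 0 = A 0 1 := by
    have := hW.posSemidef_sqrt.1.apply 0 1
    simpa using this
  have hmul : A * A = W := hW.sqrt_mul_self
  have h00 : W 0 0 = A 0 0 * A 0 0 + A 0 1 * A 1 0 := by
    rw [← hmul, Matrix.mul_apply, Fin.sum_univ_two]
  have h11 : W 1 1 = A 1 0 * A 0 1 + A 1 1 * A 1 1 := by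
    rw [← hmul, Matrix.mul_apply, Fin.sum_univ_two]
  have hsq : (A i j) ^ 2 ≤ W 0 0 + W 1 1 := by
    fin_cases i <;> fin_cases j <;>
      (dsimp only; simp only [Fin.mk_zero, Fin.mk_one]; rw [h00, h11, hsym];
        nlinarith [sq_nonneg (A 0 0), sq_nonneg (A 0 1), sq_nonneg (A 1 1)])
  exact Real.abs_le_sqrt hsq

lemma posSemidef_of_tendsto {M : ℕ → Matrix (Fin 2) (Fin 2) ℝ} {L : Matrix (Fin 2) (Fin 2) ℝ}
    (h : Tendsto M atTop (nhds L)) (hM : ∀ n, (M n).PosSemidef) : L.PosSemidef := by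
  have hent : ∀ i j : Fin 2, Tendsto (fun n => M n i j) atTop (nhds (L i j)) := by
    intro i j
    exact (tendsto_pi_nhds.mp ((tendsto_pi_nhds.mp h) i)) j
  refine Matrix.PosSemidef.of_dotProduct_mulVec_nonneg ?_ ?_
  · ext i j
    rw [Matrix.conjTranspose_apply]
    have e1 : Tendsto (fun n => M n j i) atTop (nhds (L j i)) := hent j i
    have e2 : (fun n => M n j i) = (fun n => M n i j) := by
      funext n
      have h3 : M n i j = M n j i := by simpa using (hM n).1.apply j i
      exact h3.symm
    rw [e2] at e1
    have := tendsto_nhds_unique e1 (hent i j)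
    simpa using this
  · intro x
    have key : ∀ N : Matrix (Fin 2) (Fin 2) ℝ,
        dotProduct (star x) (N.mulVec x)
          = star x 0 * (N 0 0 * x 0 + N 0 1 * x 1)
            + star x 1 * (N 1 0 * x 0 + N 1 1 * x 1) := by
      intro N
      simp [dotProduct, Matrix.mulVec, Fin.sum_univ_two]
    have hval : Tendsto (fun n => dotProduct (star x) ((M n).mulVec x)) atTop
        (nhds (dotProduct (star x) (L.mulVec x))) := by
      simp only [key]
      exact ((((hent 0 0).mul_const _).add ((hent 0 1).mul_const _)).const_mul _).add
        ((((hent 1 0).mul_const _).add ((hent 1 1).mul_const _)).const_mul _)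
    exact ge_of_tendsto' hval (fun n => (hM n).dotProduct_mulVec_nonneg x)

lemma sqrt_tendsto
    (Vn : ℕ → Matrix (Fin 2) (Fin 2) ℝ) (V : Matrix (Fin 2) (Fin 2) ℝ)
    (hVn : ∀ n, (Vn n).PosSemidef) (hV : V.PosSemidef)
    (hconv : ∀ i j, Filter.Tendsto (fun n => Vn n i j) Filter.atTop (nhds (V i j))) :
    Tendsto (fun n => (hVn n).sqrt) atTop (nhds hV.sqrt) := by
  have htr : Tendsto (fun n => Real.sqrt (Vn n 0 0 + Vn n 1 1)) atTop
      (nhds (Real.sqrt (V 0 0 + V 1 1))) :=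
    (Real.continuous_sqrt.tendsto _).comp ((hconv 0 0).add (hconv 1 1))
  obtain ⟨C, hC⟩ := htr.bddAbove_range
  have hbound : ∀ n i j, (hVn n).sqrt i j ∈ Set.Icc (-C) C := by
    intro n i j
    have h1 := sqrt_entry_bound (hVn n) i j
    have h2 : Real.sqrt (Vn n 0 0 + Vn n 1 1) ≤ C :=
      hC (Set.mem_range_self n)
    have := abs_le.mp (le_trans h1 h2)
    exact ⟨this.1, this.2⟩
  set K : Set (Matrix (Fin 2) (Fin 2) ℝ) :=
    Set.pi Set.univ (fun _ => Set.pi Set.univ (fun _ => Set.Icc (-C) C)) with hK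
  have hKcompact : IsCompact K :=
    isCompact_univ_pi (fun _ => isCompact_univ_pi (fun _ => isCompact_Icc))
  have hmem : ∀ n, (hVn n).sqrt ∈ K := by
    intro n
    rw [hK]
    intro i _
    intro j _
    exact hbound n i j
  have hVtendsto : Tendsto (fun n => Vn n) atTop (nhds V) := by
    refine tendsto_pi_nhds.mpr ?_
    intro i
    rw [tendsto_pi_nhds]
    intro j
    exact hconv i j
  haveI : FirstCountableTopology (Matrix (Fin 2) (Fin 2) ℝ) :=
    inferInstanceAs (FirstCountableTopology (Fin 2 → Fin 2 → ℝ))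
  refine tendsto_of_subseq_tendsto (fun ns hns => ?_)
  obtain ⟨B, _, φ, hφmono, hφtendsto⟩ :=
    hKcompact.tendsto_subseq (x := fun k => (hVn (ns k)).sqrt) (fun k => hmem (ns k))
  have hBpsd : B.PosSemidef :=
    posSemidef_of_tendsto hφtendsto (fun k => (hVn (ns (φ k))).posSemidef_sqrt)
  have hsq : Tendsto (fun k => (hVn (ns (φ k))).sqrt * (hVn (ns (φ k))).sqrt) atTop
      (nhds (B * B)) := hφtendsto.mul hφtendsto
  have hsq2 : (fun k => (hVn (ns (φ k))).sqrt * (hVn (ns (φ k))).sqrt)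
      = fun k => Vn (ns (φ k)) := by
    funext k
    exact (hVn (ns (φ k))).sqrt_mul_self
  rw [hsq2] at hsq
  have hsq3 : Tendsto (fun k => Vn (ns (φ k))) atTop (nhds V) :=
    hVtendsto.comp (hns.comp hφmono.tendsto_atTop)
  have hBV : B * B = V := tendsto_nhds_unique hsq hsq3
  have hBeq : B = hV.sqrt := hBpsd.eq_sqrt_of_sq_eq hV (by rw [pow_two]; exact hBV)
  exact ⟨φ, hBeq ▸ hφtendsto⟩

end PsiCont
end

open PsiCont in

/-- **Continuity of `Ψ⁻¹(·, ε)`**: if positive semidefinite matrices `Vₙ` converge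
entrywise to a positive semidefinite matrix `V`, then for every `δ > 0` and all
sufficiently large `n`, `Ψ⁻¹(Vₙ,ε) - δ𝟏 ⊆ Ψ⁻¹(V,ε) ⊆ Ψ⁻¹(Vₙ,ε) + δ𝟏`. -/
theorem psiInv_continuity
    (ε : ℝ) (hε : ε ∈ Set.Ioo (0 : ℝ) 1)
    (Vn : ℕ → Matrix (Fin 2) (Fin 2) ℝ) (V : Matrix (Fin 2) (Fin 2) ℝ)
    (hVn : ∀ n, (Vn n).PosSemidef) (hV : V.PosSemidef)
    (hconv : ∀ i j, Filter.Tendsto (fun n => Vn n i j) Filter.atTop (nhds (V i j))) :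
    ∀ δ > (0 : ℝ), ∃ N : ℕ, ∀ n ≥ N,
      ((fun z : ℝ × ℝ => z - (δ, δ)) '' PsiInv (Vn n) ε ⊆ PsiInv V ε) ∧
      (PsiInv V ε ⊆ (fun z : ℝ × ℝ => z + (δ, δ)) '' PsiInv (Vn n) ε) := by
  intro δ hδ
  set t := 1 - ε with ht
  have ht0 : 0 < t := by rw [ht]; linarith [hε.2]
  have ht1 : t < 1 := by rw [ht]; linarith [hε.1]
  set a := hV.sqrt 0 with ha
  set b := hV.sqrt 1 with hb
  have hγ2 : 0 < δ / 2 := by linarith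
  obtain ⟨c, hc0, hgap⟩ := gap2D a b ht0 ht1 hγ2
  obtain ⟨R, hR0, htail⟩ := exists_tail_small hc0
  set κ := δ / (8 * R) with hκ
  have hκ0 : 0 < κ := by rw [hκ]; positivity
  have hAten := sqrt_tendsto Vn V hVn hV hconv
  have hentry : ∀ i j : Fin 2,
      Filter.Tendsto (fun n => (hVn n).sqrt i j) Filter.atTop (nhds (hV.sqrt i j)) := by
    intro i j
    exact (tendsto_pi_nhds.mp ((tendsto_pi_nhds.mp hAten) i)) j
  have hev : ∀ᶠ n in Filter.atTop, ∀ i j : Fin 2,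
      |(hVn n).sqrt i j - hV.sqrt i j| ≤ κ := by
    have he : ∀ i j : Fin 2, ∀ᶠ n in Filter.atTop,
        |(hVn n).sqrt i j - hV.sqrt i j| ≤ κ := by
      intro i j
      have h1 : Filter.Tendsto (fun n => |(hVn n).sqrt i j - hV.sqrt i j|)
          Filter.atTop (nhds 0) := by
        have h0 := (hentry i j).sub (tendsto_const_nhds (x := hV.sqrt i j))
        rw [sub_self] at h0
        simpa using h0.abs
      exact (h1.eventually (eventually_le_nhds hκ0))
    have := (((he 0 0).and (he 0 1)).and ((he 1 0).and (he 1 1)))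
    refine this.mono ?_
    rintro n ⟨⟨h1, h2⟩, h3, h4⟩ i j
    fin_cases i <;> fin_cases j <;> assumption
  obtain ⟨N, hN⟩ := Filter.eventually_atTop.mp hev
  refine ⟨N, fun n hn => ?_⟩
  set a' := (hVn n).sqrt 0 with ha'
  set b' := (hVn n).sqrt 1 with hb'
  have hdotclose : ∀ u : Fin 2 → ℝ, (∀ i, |u i| ≤ R) → ∀ i : Fin 2,
      |dot ((hVn n).sqrt i) u - dot (hV.sqrt i) u| ≤ δ / 2 := by
    intro u hu i
    have hdiff : dot ((hVn n).sqrt i) u - dot (hV.sqrt i) u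
        = ((hVn n).sqrt i 0 - hV.sqrt i 0) * u 0 + ((hVn n).sqrt i 1 - hV.sqrt i 1) * u 1 := by
      unfold dot; ring
    rw [hdiff]
    have key : ∀ j : Fin 2, |((hVn n).sqrt i j - hV.sqrt i j) * u j| ≤ κ * R := by
      intro j
      rw [abs_mul]
      exact mul_le_mul (hN n hn i j) (hu j) (abs_nonneg _) hκ0.le
    have hκR : κ * R = δ / 8 := by
      rw [hκ]; field_simp
    calc |((hVn n).sqrt i 0 - hV.sqrt i 0) * u 0 + ((hVn n).sqrt i 1 - hV.sqrt i 1) * u 1|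
        ≤ |((hVn n).sqrt i 0 - hV.sqrt i 0) * u 0|
          + |((hVn n).sqrt i 1 - hV.sqrt i 1) * u 1| := abs_add_le _ _
      _ ≤ κ * R + κ * R := add_le_add (key 0) (key 1)
      _ ≤ δ / 2 := by rw [hκR]; linarith
  have hclose1 : ∀ u : Fin 2 → ℝ, (∀ i, |u i| ≤ R) →
      |dot a' u - dot a u| ≤ δ / 2 ∧ |dot b' u - dot b u| ≤ δ / 2 := by
    intro u hu
    exact ⟨hdotclose u hu 0, hdotclose u hu 1⟩
  have hclose2 : ∀ u : Fin 2 → ℝ, (∀ i, |u i| ≤ R) →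
      |dot a u - dot a' u| ≤ δ / 2 ∧ |dot b u - dot b' u| ≤ δ / 2 := by
    intro u hu
    obtain ⟨h1, h2⟩ := hclose1 u hu
    rw [abs_sub_comm] at h1 h2
    exact ⟨h1, h2⟩
  constructor
  · -- PsiInv (Vn n) - δ ⊆ PsiInv V
    rintro z' ⟨z, hz, rfl⟩
    rw [PsiInv, Set.mem_setOf_eq, Psi_eq _ (hVn n)] at hz
    show z - (δ, δ) ∈ PsiInv V ε
    rw [PsiInv, Set.mem_setOf_eq, Psi_eq _ hV]
    have coup := coupling (a := a') (b := b') (a' := a) (b' := b) hclose2 (-z.1, -z.2)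
    have hstep1 : t - c ≤ psi a b (-z.1 + δ / 2, -z.2 + δ / 2) := by
      have h1 : t ≤ psi a' b' (-z.1, -z.2) := hz
      dsimp only at coup
      linarith
    have hstep2 := hgap _ hstep1
    dsimp only at hstep2
    have hpr : (-(z - (δ, δ)).1, -(z - (δ, δ)).2) = (-z.1 + δ / 2 + δ / 2, -z.2 + δ / 2 + δ / 2) := by
      simp [Prod.ext_iff]
      constructor <;> ring
    rw [hpr]
    linarith
  · -- PsiInv V ⊆ PsiInv (Vn n) + δ
    intro z hz
    rw [PsiInv, Set.mem_setOf_eq, Psi_eq _ hV] at hz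
    refine ⟨z - (δ, δ), ?_, ?_⟩
    · rw [PsiInv, Set.mem_setOf_eq, Psi_eq _ (hVn n)]
      have hstep1 : t - c ≤ psi a b (-z.1, -z.2) := by linarith [hz]
      have hstep2 := hgap _ hstep1
      dsimp only at hstep2
      have coup := coupling (a := a) (b := b) (a' := a') (b' := b')
        hclose1 (-z.1 + δ / 2, -z.2 + δ / 2)
      dsimp only at coup
      have hpr : (-(z - (δ, δ)).1, -(z - (δ, δ)).2)
          = (-z.1 + δ / 2 + δ / 2, -z.2 + δ / 2 + δ / 2) := by
        simp [Prod.ext_iff]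
        constructor <;> ring
      rw [hpr]
      linarith
    · simp [Prod.ext_iff]
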